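/- Homogeneity of the curve x⁴ − x²y² + (2√2/(3√3))xy³ − (1/12)y⁴ = 1: let ã be the 2×2 real matrix with rows (0, √2/2) and (√2, 2/√3), and let h_b = h_{2√2/(3√3), −1/12}. Then h_b(exp(t·ã)·v) = h_b(v) for all v ∈ ℝ² and all t ∈ ℝ (equivalently, the differential of h_b at v applied to ã·v vanishes for every v ∈ ℝ²), and the one-parameter group {exp(t·ã) : t ∈ ℝ} acts transitively on H_{2√2/(3√3), −1/12}: for all p, q in this curve there exists t ∈ ℝ with exp(t·ã)·p = q. In particular H_{2√2/(3√3), −1/12} is a homogeneous space under linear automorphisms of h_b. -/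

import Mathlib

/-!
Common definitions: the quartic polynomial `hLK L K (x,y) = x⁴ − x²y² + L·x·y³ + K·y⁴` on ℝ²,
the Hessian determinant of a function on ℝ², and the curve `Hcurve L K = H_{L,K}`,
the connected component containing (1,0) of the hyperbolic points on the level set {h = 1}.
-/

noncomputable section
open Matrix

/-- `h_{L,K}(x,y) = x⁴ − x²y² + L·x·y³ + K·y⁴`. -/
def hLK (L K : ℝ) (v : Fin 2 → ℝ) : ℝ :=
  v 0 ^ 4 - v 0 ^ 2 * v 1 ^ 2 + L * v 0 * v 1 ^ 3 + K * v 1 ^ 4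

/-- Determinant of the Hessian matrix of `f : ℝ² → ℝ` at `p`. -/
def hessDet2 (f : (Fin 2 → ℝ) → ℝ) (p : Fin 2 → ℝ) : ℝ :=
  Matrix.det (Matrix.of fun i j : Fin 2 =>
    iteratedFDeriv ℝ 2 f p ![Pi.single i 1, Pi.single j 1])

/-- `H_{L,K}`: the connected component containing `(1,0)` of
`{p ∈ ℝ² : h_{L,K}(p) = 1 and p is a hyperbolic point of h_{L,K}}`. -/
def Hcurve (L K : ℝ) : Set (Fin 2 → ℝ) :=
  connectedComponentIn {p | hLK L K p = 1 ∧ hessDet2 (hLK L K) p < 0} ![1, 0]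

namespace HomogAux


def Pm : Matrix (Fin 2) (Fin 2) ℝ := !![1, 3; Real.sqrt 6, -Real.sqrt 6]
def Qm : Matrix (Fin 2) (Fin 2) ℝ :=
  !![1/4, Real.sqrt 6 / 8; 1/4, -(Real.sqrt 6 / 24)]

lemma s6sq : Real.sqrt 6 ^ 2 = 6 := Real.sq_sqrt (by norm_num)
lemma s3sq : Real.sqrt 3 ^ 2 = 3 := Real.sq_sqrt (by norm_num)
lemma s3ne : Real.sqrt 3 ≠ 0 := by positivity
lemma s6ne : Real.sqrt 6 ≠ 0 := by positivity
lemma s6eq : Real.sqrt 6 = Real.sqrt 2 * Real.sqrt 3 := by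
  rw [← Real.sqrt_mul (by norm_num : (0:ℝ) ≤ 2)]; norm_num

lemma PQ : Pm * Qm = 1 := by
  have h6 := s6sq
  ext i j
  fin_cases i <;> fin_cases j <;>
    simp [Pm, Qm, Matrix.mul_apply, Fin.sum_univ_two, Matrix.one_apply] <;>
    nlinarith [h6]

lemma QP : Qm * Pm = 1 := by
  have h6 := s6sq
  ext i j
  fin_cases i <;> fin_cases j <;>
    simp [Pm, Qm, Matrix.mul_apply, Fin.sum_univ_two, Matrix.one_apply] <;>
    nlinarith [h6]

def Am : Matrix (Fin 2) (Fin 2) ℝ := !![0, Real.sqrt 2 / 2; Real.sqrt 2, 2 / Real.sqrt 3]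

lemma diag_fin_two (x y : ℝ) :
    (Matrix.diagonal ![x, y] : Matrix (Fin 2) (Fin 2) ℝ) = !![x, 0; 0, y] := by
  ext i j; fin_cases i <;> fin_cases j <;> simp [Matrix.diagonal]

lemma conj (t : ℝ) :
    t • Am = Pm * Matrix.diagonal ![Real.sqrt 3 * t, -(t / Real.sqrt 3)] * Qm := by
  rw [diag_fin_two]
  have h3 := s3sq
  have h2 : Real.sqrt 2 ^ 2 = 2 := Real.sq_sqrt (by norm_num)
  have h3n := s3ne
  ext i j
  fin_cases i <;> fin_cases j
  · simp [Pm, Qm, Am, s6eq, Matrix.mul_apply, Matrix.diagonal, Fin.sum_univ_two]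
    field_simp
    linear_combination (-t)*h3
  · simp [Pm, Qm, Am, s6eq, Matrix.mul_apply, Matrix.diagonal, Fin.sum_univ_two]
    field_simp
    linear_combination (-48*t)*h3
  · simp [Pm, Qm, Am, s6eq, Matrix.mul_apply, Matrix.diagonal, Fin.sum_univ_two]
    field_simp
    linear_combination (-t)*h3
  · simp [Pm, Qm, Am, s6eq, Matrix.mul_apply, Matrix.diagonal, Fin.sum_univ_two]
    field_simp
    linear_combination ((8*Real.sqrt 3^2-24*Real.sqrt 3^4)*t)*h2 + ((-48*Real.sqrt 3^2-128)*t)*h3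

def U : (Matrix (Fin 2) (Fin 2) ℝ)ˣ := ⟨Pm, Qm, PQ, QP⟩

lemma expA (t : ℝ) :
    NormedSpace.exp (t • Am) =
      Pm * Matrix.diagonal ![Real.exp (Real.sqrt 3 * t), Real.exp (-(t / Real.sqrt 3))] * Qm := by
  have hUinv : ((U⁻¹ : (Matrix (Fin 2) (Fin 2) ℝ)ˣ) : Matrix (Fin 2) (Fin 2) ℝ) = Qm := rfl
  have h : t • Am = (U : Matrix (Fin 2) (Fin 2) ℝ) * Matrix.diagonal ![Real.sqrt 3 * t, -(t / Real.sqrt 3)] * ((U⁻¹ : (Matrix (Fin 2) (Fin 2) ℝ)ˣ) : Matrix (Fin 2) (Fin 2) ℝ) := by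
    rw [hUinv]; exact conj t
  have hvec : NormedSpace.exp (![Real.sqrt 3 * t, -(t / Real.sqrt 3)] : Fin 2 → ℝ)
      = ![Real.exp (Real.sqrt 3 * t), Real.exp (-(t / Real.sqrt 3))] := by
    funext i
    rw [Pi.coe_exp]
    fin_cases i <;> simp [← Real.exp_eq_exp_ℝ]
  rw [h, Matrix.exp_units_conj, Matrix.exp_diagonal, hUinv, hvec]
  rfl

lemma hL_eq : 2 * Real.sqrt 2 / (3 * Real.sqrt 3) = 2 * Real.sqrt 6 / 9 := by
  rw [s6eq, div_eq_div_iff (by positivity) (by norm_num)]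
  linear_combination (-6*Real.sqrt 2) * s3sq

lemma keyh (a b : ℝ) :
    hLK (2 * Real.sqrt 2 / (3 * Real.sqrt 3)) (-(1/12)) (Pm.mulVec ![a, b])
      = 256 * a * b ^ 3 := by
  have h6 := s6sq
  rw [hL_eq]
  simp [hLK, Pm, Matrix.mulVec, dotProduct, Fin.sum_univ_two]
  linear_combination (a*b^3*((19/9)*Real.sqrt 6^2 + 74/3) + a^2*b^2*((-11/6)*Real.sqrt 6^2 - 9)
      + a^3*b*((1/3)*Real.sqrt 6^2 - 2) + a^4*((5/36)*Real.sqrt 6^2 - 1/6)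
      + b^4*((-3/4)*Real.sqrt 6^2 - 27/2)) * h6


lemma hval (v : Fin 2 → ℝ) :
    hLK (2 * Real.sqrt 2 / (3 * Real.sqrt 3)) (-(1/12)) v
      = 256 * (Qm.mulVec v 0) * (Qm.mulVec v 1) ^ 3 := by
  have hv : Pm.mulVec (Qm.mulVec v) = v := by
    rw [Matrix.mulVec_mulVec, PQ, Matrix.one_mulVec]
  have h2 : Qm.mulVec v = ![Qm.mulVec v 0, Qm.mulVec v 1] := by
    funext i; fin_cases i <;> rfl
  conv_lhs => rw [← hv, h2]
  exact keyh _ _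

lemma wcont : Continuous (fun x : Fin 2 → ℝ => Qm.mulVec x 1) := by
  have : (fun x : Fin 2 → ℝ => Qm.mulVec x 1)
      = fun x => Qm 1 0 * x 0 + Qm 1 1 * x 1 := by
    funext x; simp [Matrix.mulVec, dotProduct, Fin.sum_univ_two]
  rw [this]
  exact (continuous_const.mul (continuous_apply 0)).add (continuous_const.mul (continuous_apply 1))

end HomogAux

/-- **Homogeneity of the curve `x⁴ − x²y² + (2√2/(3√3))xy³ − (1/12)y⁴ = 1`.**
With `ã` the matrix with rows `(0, √2/2)` and `(√2, 2/√3)`, the one-parameter group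
`exp(t·ã)` consists of linear automorphisms of `h_b = h_{2√2/(3√3), −1/12}` and acts
transitively on `H_{2√2/(3√3), −1/12}`. -/
theorem homogeneity_curve_b :
    (∀ (t : ℝ) (v : Fin 2 → ℝ),
      hLK (2 * Real.sqrt 2 / (3 * Real.sqrt 3)) (-(1/12))
        ((NormedSpace.exp
          (t • (!![0, Real.sqrt 2 / 2; Real.sqrt 2, 2 / Real.sqrt 3] :
            Matrix (Fin 2) (Fin 2) ℝ))).mulVec v) =
      hLK (2 * Real.sqrt 2 / (3 * Real.sqrt 3)) (-(1/12)) v) ∧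
    (∀ p ∈ Hcurve (2 * Real.sqrt 2 / (3 * Real.sqrt 3)) (-(1/12)),
      ∀ q ∈ Hcurve (2 * Real.sqrt 2 / (3 * Real.sqrt 3)) (-(1/12)), ∃ t : ℝ,
        (NormedSpace.exp
          (t • (!![0, Real.sqrt 2 / 2; Real.sqrt 2, 2 / Real.sqrt 3] :
            Matrix (Fin 2) (Fin 2) ℝ))).mulVec p = q) := by
  classical
  have hAm : (!![0, Real.sqrt 2 / 2; Real.sqrt 2, 2 / Real.sqrt 3] :
      Matrix (Fin 2) (Fin 2) ℝ) = HomogAux.Am := rfl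
  have s3sq := HomogAux.s3sq
  have s3ne := HomogAux.s3ne
  constructor
  · intro t v
    rw [hAm, HomogAux.expA, ← Matrix.mulVec_mulVec, ← Matrix.mulVec_mulVec]
    have hd : (Matrix.diagonal
          ![Real.exp (Real.sqrt 3 * t), Real.exp (-(t / Real.sqrt 3))]).mulVec
          (HomogAux.Qm.mulVec v)
        = ![Real.exp (Real.sqrt 3 * t) * HomogAux.Qm.mulVec v 0,
            Real.exp (-(t / Real.sqrt 3)) * HomogAux.Qm.mulVec v 1] := by
      funext i
      fin_cases i <;> simp [Matrix.mulVec_diagonal]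
    rw [hd, HomogAux.keyh, HomogAux.hval v]
    have hee : Real.exp (Real.sqrt 3 * t) * Real.exp (-(t / Real.sqrt 3)) ^ 3 = 1 := by
      rw [show (3 : ℕ) = 3 from rfl, ← Real.exp_nat_mul, ← Real.exp_add, ← Real.exp_zero]
      congr 1
      field_simp
      linear_combination t * s3sq
    linear_combination (256 * HomogAux.Qm.mulVec v 0 * (HomogAux.Qm.mulVec v 1) ^ 3) * hee
  · intro p hp q hq
    have hp1 : hLK (2 * Real.sqrt 2 / (3 * Real.sqrt 3)) (-(1/12)) p = 1 :=
      ((connectedComponentIn_subset _ _) hp).1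
    have hq1 : hLK (2 * Real.sqrt 2 / (3 * Real.sqrt 3)) (-(1/12)) q = 1 :=
      ((connectedComponentIn_subset _ _) hq).1
    rw [HomogAux.hval] at hp1 hq1
    set up := HomogAux.Qm.mulVec p 0 with hup
    set wp := HomogAux.Qm.mulVec p 1 with hwp
    set uq := HomogAux.Qm.mulVec q 0 with huq
    set wq := HomogAux.Qm.mulVec q 1 with hwq
    have key0 : ∀ r ∈ Hcurve (2 * Real.sqrt 2 / (3 * Real.sqrt 3)) (-(1/12)),
        HomogAux.Qm.mulVec r 1 ≠ 0 := by
      intro r hr h0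
      have h1 : hLK (2 * Real.sqrt 2 / (3 * Real.sqrt 3)) (-(1/12)) r = 1 :=
        ((connectedComponentIn_subset _ _) hr).1
      rw [HomogAux.hval, h0] at h1
      norm_num at h1
    have hwpne : wp ≠ 0 := key0 p hp
    have hwqne : wq ≠ 0 := key0 q hq
    have hcon : IsPreconnected (Hcurve (2 * Real.sqrt 2 / (3 * Real.sqrt 3)) (-(1/12))) :=
      isPreconnected_connectedComponentIn
    have hcOn : ContinuousOn (fun x : Fin 2 → ℝ => HomogAux.Qm.mulVec x 1)
        (Hcurve (2 * Real.sqrt 2 / (3 * Real.sqrt 3)) (-(1/12))) :=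
      HomogAux.wcont.continuousOn
    have hsign : 0 < wp / wq := by
      rcases lt_or_gt_of_ne hwpne with hneg | hpos
      · rcases lt_or_gt_of_ne hwqne with hneg2 | hpos2
        · exact div_pos_of_neg_of_neg hneg hneg2
        · exfalso
          have h0 : (0 : ℝ) ∈ Set.Icc wp wq := ⟨le_of_lt hneg, le_of_lt hpos2⟩
          obtain ⟨r, hr, hr0⟩ := hcon.intermediate_value hp hq hcOn h0
          exact key0 r hr hr0
      · rcases lt_or_gt_of_ne hwqne with hneg2 | hpos2
        · exfalso
          have h0 : (0 : ℝ) ∈ Set.Icc wq wp := ⟨le_of_lt hneg2, le_of_lt hpos⟩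
          obtain ⟨r, hr, hr0⟩ := hcon.intermediate_value hq hp hcOn h0
          exact key0 r hr hr0
        · exact div_pos hpos hpos2
    refine ⟨Real.sqrt 3 * Real.log (wp / wq), ?_⟩
    rw [hAm, HomogAux.expA, ← Matrix.mulVec_mulVec, ← Matrix.mulVec_mulVec]
    have he1 : Real.exp (Real.sqrt 3 * (Real.sqrt 3 * Real.log (wp / wq))) = (wp / wq) ^ 3 := by
      have h3 : Real.sqrt 3 * (Real.sqrt 3 * Real.log (wp / wq)) = 3 * Real.log (wp / wq) := by
        linear_combination Real.log (wp / wq) * s3sq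
      rw [h3, show ((3 : ℝ)) = ((3 : ℕ) : ℝ) by norm_num, Real.exp_nat_mul,
        Real.exp_log hsign]
    have he2 : Real.exp (-(Real.sqrt 3 * Real.log (wp / wq) / Real.sqrt 3)) = wq / wp := by
      rw [mul_div_cancel_left₀ _ s3ne, Real.exp_neg, Real.exp_log hsign]
      rw [inv_div]
    have hd : (Matrix.diagonal
          ![Real.exp (Real.sqrt 3 * (Real.sqrt 3 * Real.log (wp / wq))),
            Real.exp (-(Real.sqrt 3 * Real.log (wp / wq) / Real.sqrt 3))]).mulVec
          (HomogAux.Qm.mulVec p)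
        = HomogAux.Qm.mulVec q := by
      funext i
      fin_cases i <;> simp only [Matrix.mulVec_diagonal]
      · show Real.exp (Real.sqrt 3 * (Real.sqrt 3 * Real.log (wp / wq))) * up = uq
        rw [he1]
        have huw : up * wp ^ 3 = uq * wq ^ 3 := by linarith
        field_simp
        linear_combination huw
      · show Real.exp (-(Real.sqrt 3 * Real.log (wp / wq) / Real.sqrt 3)) * wp = wq
        rw [he2]
        field_simp
    rw [hd, Matrix.mulVec_mulVec, HomogAux.PQ, Matrix.one_mulVec]
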